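/- Let p ∈ ℕ, let x_0 < x_N be real numbers, and let y_{0,2l}, y_{N,2l} ∈ ℝ for 0 ≤ l ≤ p. Then there exists a unique polynomial function q : ℝ → ℝ of degree at most 2p+1 satisfying the Lidstone conditions q^{(2l)}(x_0) = y_{0,2l} and q^{(2l)}(x_N) = y_{N,2l} for all 0 ≤ l ≤ p, and it is given explicitly by q(x) = Σ_{l=0}^{p} [ y_{0,2l} · Λ_l((x_N − x)/(x_N − x_0)) + y_{N,2l} · Λ_l((x − x_0)/(x_N − x_0)) ] · (x_N − x_0)^{2l}. -/

import Mathlib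

open Polynomial in
private lemma aux_natDeg_le (Q : ℝ[X]) : Q.natDegree ≤ (derivative Q).natDegree + 1 := by
  rcases Nat.eq_zero_or_pos Q.natDegree with h | h
  · omega
  · have hQ : Q ≠ 0 := fun h0 => by simp [h0] at h
    have hc : (derivative Q).coeff (Q.natDegree - 1) ≠ 0 := by
      rw [coeff_derivative]
      have h1 : Q.natDegree - 1 + 1 = Q.natDegree := by omega
      rw [h1]
      refine mul_ne_zero (mt leadingCoeff_eq_zero.mp hQ) ?_
      positivity
    have := le_natDegree_of_ne_zero hc
    omega

open Polynomial in
private lemma aux_iter_add (a b : ℝ[X]) (k : ℕ) :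
    derivative^[k] (a + b) = derivative^[k] a + derivative^[k] b := by
  induction k with
  | zero => rfl
  | succ k ih => rw [Function.iterate_succ_apply', ih, derivative_add,
      Function.iterate_succ_apply', Function.iterate_succ_apply']

open Polynomial in
private lemma aux_lin_zero (r : ℝ[X]) (hdd : derivative (derivative r) = 0)
    (a b : ℝ) (hab : a ≠ b) (ha : r.eval a = 0) (hb : r.eval b = 0) : r = 0 := by
  set c := (derivative r).coeff 0 with hcdef
  have hdc : derivative r = C c := eq_C_of_derivative_eq_zero hdd
  have hs : derivative (r - C c * X) = 0 := by
    rw [derivative_sub, hdc, derivative_C_mul_X, sub_self]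
  have hs2 := eq_C_of_derivative_eq_zero hs
  set d := (r - C c * X).coeff 0 with hddef
  have hr : r = C c * X + C d := by rw [← hs2]; ring
  have ea : c * a + d = 0 := by rw [hr] at ha; simpa using ha
  have eb : c * b + d = 0 := by rw [hr] at hb; simpa using hb
  have hc0 : c = 0 := by
    have h3 : c * (a - b) = 0 := by
      have : c * (a - b) = (c * a + d) - (c * b + d) := by ring
      rw [this, ea, eb, sub_zero]
    rcases mul_eq_zero.mp h3 with h | h
    · exact h
    · exact absurd (sub_eq_zero.mp h) hab
  have hd0 : d = 0 := by rw [hc0] at ea; linarith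
  rw [hr, hc0, hd0]; simp

open Polynomial in
private lemma aux_comp_deriv (Q : ℝ[X]) (a b : ℝ) (k : ℕ) :
    derivative^[k] (Q.comp (C b * X + C a)) =
      C (b ^ k) * (derivative^[k] Q).comp (C b * X + C a) := by
  induction k with
  | zero => simp
  | succ k ih =>
    rw [Function.iterate_succ_apply', ih, derivative_C_mul, derivative_comp,
      Function.iterate_succ_apply']
    simp [pow_succ]
    ring

/-- The defining property of the sequence of Lidstone polynomial functions. -/
def LidstoneProp (Λ : ℕ → ℝ → ℝ) : Prop :=
  (∀ l : ℕ, ∃ P : Polynomial ℝ, ∀ x : ℝ, Λ l x = P.eval x) ∧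
  (∀ x : ℝ, Λ 0 x = x) ∧
  (∀ l : ℕ, (∀ x : ℝ, iteratedDeriv 2 (Λ (l + 1)) x = Λ l x) ∧
    Λ (l + 1) 0 = 0 ∧ Λ (l + 1) 1 = 0)

/-- There exists a unique polynomial `q` of degree at most `2p+1` satisfying the
Lidstone conditions `q^(2l)(x₀) = y₀ l`, `q^(2l)(xN) = yN l` for `0 ≤ l ≤ p`, and
it is given explicitly by the Lidstone interpolation formula. -/
theorem lidstone_interpolating_polynomial (Λ : ℕ → ℝ → ℝ) (hΛ : LidstoneProp Λ)
    (p : ℕ) (x₀ xN : ℝ) (hx : x₀ < xN) (y₀ yN : ℕ → ℝ) :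
    (∃! q : Polynomial ℝ, q.natDegree ≤ 2 * p + 1 ∧
      ∀ l ≤ p, (Polynomial.derivative^[2 * l] q).eval x₀ = y₀ l ∧
        (Polynomial.derivative^[2 * l] q).eval xN = yN l) ∧
    (∀ q : Polynomial ℝ,
      (q.natDegree ≤ 2 * p + 1 ∧
        ∀ l ≤ p, (Polynomial.derivative^[2 * l] q).eval x₀ = y₀ l ∧
          (Polynomial.derivative^[2 * l] q).eval xN = yN l) →
      ∀ x : ℝ, q.eval x = ∑ l ∈ Finset.range (p + 1),
        (y₀ l * Λ l ((xN - x) / (xN - x₀)) + yN l * Λ l ((x - x₀) / (xN - x₀))) *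
          (xN - x₀) ^ (2 * l)) := by
  open Polynomial in
  obtain ⟨hpoly, h0, hrec⟩ := hΛ
  choose P hP using hpoly
  have P0 : P 0 = X := Polynomial.funext fun x => by rw [← hP, h0, eval_X]
  have evalkey : ∀ (Q : ℝ[X]) (x : ℝ),
      iteratedDeriv 2 (fun t => Q.eval t) x = (derivative (derivative Q)).eval x := by
    intro Q x
    have hd : (deriv fun t => Q.eval t) = fun t => (derivative Q).eval t :=
      funext fun t => Polynomial.deriv Q
    rw [iteratedDeriv_succ, iteratedDeriv_one, hd]
    exact Polynomial.deriv (derivative Q)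
  have Prec : ∀ l, derivative (derivative (P (l + 1))) = P l := by
    intro l
    refine Polynomial.funext fun x => ?_
    have h1 := (hrec l).1 x
    have h2 : Λ (l + 1) = fun t => (P (l + 1)).eval t := funext fun t => hP _ t
    rw [h2, evalkey] at h1
    rw [h1, ← hP]
  have Prec2 : ∀ l, derivative^[2] (P (l + 1)) = P l := by
    intro l
    rw [show (2 : ℕ) = 1 + 1 from rfl, Function.iterate_add_apply]
    simpa using Prec l
  have Pval0 : ∀ l, (P (l + 1)).eval 0 = 0 := fun l => by rw [← hP]; exact (hrec l).2.1
  have Pval1 : ∀ l, (P (l + 1)).eval 1 = 0 := fun l => by rw [← hP]; exact (hrec l).2.2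
  have degP : ∀ l, (P l).natDegree ≤ 2 * l + 1 := by
    intro l; induction l with
    | zero => rw [P0]; simpa using natDegree_X_le
    | succ l ih =>
      have h1 := aux_natDeg_le (P (l + 1))
      have h2 := aux_natDeg_le (derivative (P (l + 1)))
      rw [Prec l] at h2
      omega
  have Piter : ∀ (k m : ℕ), derivative^[2 * k] (P (k + m)) = P m := by
    intro k
    induction k with
    | zero => intro m; simpa using rfl
    | succ k ih =>
      intro m
      rw [show 2 * (k + 1) = 2 * k + 2 by ring, Function.iterate_add_apply,
        show k + 1 + m = k + m + 1 by ring, Prec2 (k + m), ih]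
  have Piter0 : ∀ (k m : ℕ), m < k → derivative^[2 * k] (P m) = 0 := by
    intro k m hmk
    exact iterate_derivative_eq_zero (lt_of_le_of_lt (degP m) (by omega))
  -- setup
  set h : ℝ := xN - x₀ with hh
  have hne : h ≠ 0 := ne_of_gt (sub_pos.mpr hx)
  set A₀ : ℝ[X] := C (-(1/h)) * X + C (xN/h) with hA₀
  set AN : ℝ[X] := C (1/h) * X + C (-(x₀/h)) with hAN
  have evalA₀ : ∀ x : ℝ, A₀.eval x = (xN - x) / h := by
    intro x; rw [hA₀]; simp; field_simp; ring
  have evalAN : ∀ x : ℝ, AN.eval x = (x - x₀) / h := by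
    intro x; rw [hAN]; simp; field_simp; ring
  have evalA₀0 : A₀.eval x₀ = 1 := by rw [evalA₀]; rw [hh]; field_simp; exact div_self (ne_of_gt (sub_pos.mpr hx))
  have evalA₀N : A₀.eval xN = 0 := by rw [evalA₀]; simp
  have evalAN0 : AN.eval x₀ = 0 := by rw [evalAN]; simp
  have evalANN : AN.eval xN = 1 := by rw [evalAN]; rw [hh]; field_simp; exact div_self (ne_of_gt (sub_pos.mpr hx))
  set Q : ℝ[X] := ∑ l ∈ Finset.range (p + 1),
      (C (y₀ l) * (P l).comp A₀ + C (yN l) * (P l).comp AN) * C (h ^ (2 * l)) with hQ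
  -- degree bound
  have hQdeg : Q.natDegree ≤ 2 * p + 1 := by
    rw [hQ]
    refine natDegree_sum_le_of_forall_le _ _ fun l hl => ?_
    have hl' : l ≤ p := by simpa [Nat.lt_succ_iff] using hl
    have hcomp : ∀ A : ℝ[X], A.natDegree ≤ 1 → ((P l).comp A).natDegree ≤ 2 * p + 1 := by
      intro A hA
      refine le_trans natDegree_comp_le ?_
      calc (P l).natDegree * A.natDegree ≤ (2 * l + 1) * 1 :=
            Nat.mul_le_mul (degP l) hA
        _ ≤ 2 * p + 1 := by omega
    have h1 := hcomp A₀ natDegree_linear_le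
    have h2 := hcomp AN natDegree_linear_le
    calc ((C (y₀ l) * (P l).comp A₀ + C (yN l) * (P l).comp AN) * C (h ^ (2 * l))).natDegree
        ≤ (C (y₀ l) * (P l).comp A₀ + C (yN l) * (P l).comp AN).natDegree
            + (C (h ^ (2 * l))).natDegree := natDegree_mul_le
      _ ≤ max ((C (y₀ l) * (P l).comp A₀).natDegree)
            ((C (yN l) * (P l).comp AN).natDegree) + 0 := by
          rw [natDegree_C]; exact Nat.add_le_add_right (natDegree_add_le _ _) 0
      _ ≤ 2 * p + 1 := by
          rw [Nat.add_zero]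
          exact max_le (le_trans (natDegree_C_mul_le _ _) h1)
            (le_trans (natDegree_C_mul_le _ _) h2)
  -- derivative formula
  have hQder : ∀ k, derivative^[2 * k] Q = ∑ l ∈ Finset.range (p + 1),
      (C (y₀ l) * (C ((-(1/h)) ^ (2 * k)) * (derivative^[2 * k] (P l)).comp A₀)
        + C (yN l) * (C ((1/h) ^ (2 * k)) * (derivative^[2 * k] (P l)).comp AN))
        * C (h ^ (2 * l)) := by
    intro k
    rw [hQ, iterate_derivative_sum]
    refine Finset.sum_congr rfl fun l _ => ?_
    rw [mul_comm _ (C (h ^ (2 * l))), iterate_derivative_C_mul, aux_iter_add,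
      iterate_derivative_C_mul, iterate_derivative_C_mul, hA₀, hAN,
      aux_comp_deriv, aux_comp_deriv, mul_comm (C (h ^ (2 * l)))]
  have hpowA : ∀ l : ℕ, (-(1/h)) ^ (2 * l) * h ^ (2 * l) = 1 := by
    intro l
    rw [← mul_pow]
    have e : -(1/h) * h = -1 := by field_simp
    rw [e, pow_mul]
    norm_num
  have hpowB : ∀ l : ℕ, (1/h) ^ (2 * l) * h ^ (2 * l) = 1 := by
    intro l
    rw [← mul_pow]
    have e : (1/h) * h = 1 := by field_simp
    rw [e, one_pow]
  -- conditions satisfied by Q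
  have hcond : ∀ l ≤ p, (derivative^[2 * l] Q).eval x₀ = y₀ l ∧
      (derivative^[2 * l] Q).eval xN = yN l := by
    intro l hl
    have heval : ∀ z : ℝ, (derivative^[2 * l] Q).eval z =
        ∑ l' ∈ Finset.range (p + 1),
          (y₀ l' * ((-(1/h)) ^ (2 * l) * ((derivative^[2 * l] (P l')).comp A₀).eval z)
            + yN l' * ((1/h) ^ (2 * l) * ((derivative^[2 * l] (P l')).comp AN).eval z))
            * h ^ (2 * l') := by
      intro z
      rw [hQder l, eval_finset_sum]
      refine Finset.sum_congr rfl fun l' _ => ?_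
      simp
    have hPl : derivative^[2 * l] (P l) = X := by
      have := Piter l 0
      rw [Nat.add_zero] at this
      rw [this, P0]
    have hPgt : ∀ l', l < l' → ∃ m, derivative^[2 * l] (P l') = P (m + 1) := by
      intro l' hlt
      refine ⟨l' - l - 1, ?_⟩
      have h2 := Piter l (l' - l - 1 + 1)
      rwa [show l + (l' - l - 1 + 1) = l' by omega] at h2
    have hzero : ∀ (z : ℝ), A₀.eval z = 0 ∨ A₀.eval z = 1 → AN.eval z = 0 ∨ AN.eval z = 1 →
        ∀ l' ∈ Finset.range (p + 1), l' ≠ l →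
        (y₀ l' * ((-(1/h)) ^ (2 * l) * ((derivative^[2 * l] (P l')).comp A₀).eval z)
          + yN l' * ((1/h) ^ (2 * l) * ((derivative^[2 * l] (P l')).comp AN).eval z))
          * h ^ (2 * l') = 0 := by
      intro z hz0 hzN l' _ hne'
      rcases lt_or_gt_of_ne hne' with hlt | hgt
      · rw [Piter0 l l' hlt]; simp
      · obtain ⟨m, hm⟩ := hPgt l' hgt
        rw [hm]
        have e0 : ((P (m + 1)).comp A₀).eval z = 0 := by
          rw [eval_comp]
          rcases hz0 with hc | hc <;> rw [hc]
          · exact Pval0 m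
          · exact Pval1 m
        have eN : ((P (m + 1)).comp AN).eval z = 0 := by
          rw [eval_comp]
          rcases hzN with hc | hc <;> rw [hc]
          · exact Pval0 m
          · exact Pval1 m
        rw [e0, eN]
        ring
    have hmem : l ∈ Finset.range (p + 1) := Finset.mem_range.mpr (by omega)
    constructor
    · rw [heval x₀, Finset.sum_eq_single l]
      · rw [hPl]
        have e1 : (X.comp A₀).eval x₀ = 1 := by rw [eval_comp, eval_X, evalA₀0]
        have e2 : (X.comp AN).eval x₀ = 0 := by rw [eval_comp, eval_X, evalAN0]
        rw [e1, e2]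
        linear_combination y₀ l * hpowA l
      · intro l' hl' hne'
        exact hzero x₀ (Or.inr evalA₀0) (Or.inl evalAN0) l' hl' hne'
      · intro hnot; exact absurd hmem hnot
    · rw [heval xN, Finset.sum_eq_single l]
      · rw [hPl]
        have e1 : (X.comp A₀).eval xN = 0 := by rw [eval_comp, eval_X, evalA₀N]
        have e2 : (X.comp AN).eval xN = 1 := by rw [eval_comp, eval_X, evalANN]
        rw [e1, e2]
        linear_combination yN l * hpowB l
      · intro l' hl' hne'
        exact hzero xN (Or.inl evalA₀N) (Or.inr evalANN) l' hl' hne'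
      · intro hnot; exact absurd hmem hnot
  -- uniqueness
  have huniq : ∀ q₁ q₂ : ℝ[X],
      (q₁.natDegree ≤ 2 * p + 1 ∧ ∀ l ≤ p, (derivative^[2 * l] q₁).eval x₀ = y₀ l ∧
        (derivative^[2 * l] q₁).eval xN = yN l) →
      (q₂.natDegree ≤ 2 * p + 1 ∧ ∀ l ≤ p, (derivative^[2 * l] q₂).eval x₀ = y₀ l ∧
        (derivative^[2 * l] q₂).eval xN = yN l) → q₁ = q₂ := by
    rintro q₁ q₂ ⟨hd₁, hv₁⟩ ⟨hd₂, hv₂⟩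
    have key : ∀ k, k ≤ p + 1 → derivative^[2 * (p + 1 - k)] (q₁ - q₂) = 0 := by
      intro k
      induction k with
      | zero =>
        intro _
        simp only [Nat.sub_zero]
        refine iterate_derivative_eq_zero ?_
        have := natDegree_sub_le q₁ q₂
        have h1 := max_le hd₁ hd₂
        omega
      | succ k ih =>
        intro hk
        have hprev := ih (by omega)
        set m := p - k with hm
        have hm1 : p + 1 - k = m + 1 := by omega
        have hm2 : p + 1 - (k + 1) = m := by omega
        have hmp : m ≤ p := by omega
        rw [hm2]
        refine aux_lin_zero _ ?_ x₀ xN (ne_of_lt hx) ?_ ?_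
        · have e : derivative (derivative (derivative^[2 * m] (q₁ - q₂)))
              = derivative^[2 * (m + 1)] (q₁ - q₂) := by
            rw [show 2 * (m + 1) = 1 + (1 + 2 * m) by ring, Function.iterate_add_apply,
              Function.iterate_add_apply]
            simp
          rw [e, ← hm1, hprev]
        · rw [iterate_derivative_sub, eval_sub, (hv₁ m hmp).1, (hv₂ m hmp).1, sub_self]
        · rw [iterate_derivative_sub, eval_sub, (hv₁ m hmp).2, (hv₂ m hmp).2, sub_self]
    have h0' := key (p + 1) le_rfl
    simp only [Nat.sub_self, Nat.mul_zero, Function.iterate_zero, id_eq] at h0'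
    exact sub_eq_zero.mp h0'
  -- conclusion
  refine ⟨⟨Q, ⟨hQdeg, hcond⟩, fun q hq => huniq q Q hq ⟨hQdeg, hcond⟩⟩, ?_⟩
  intro q hq x
  rw [huniq q Q hq ⟨hQdeg, hcond⟩, hQ, eval_finset_sum]
  refine Finset.sum_congr rfl fun l _ => ?_
  rw [eval_mul, eval_add, eval_mul, eval_mul, eval_C, eval_C, eval_C,
    eval_comp, eval_comp, evalA₀, evalAN, ← hP, ← hP, hh]
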